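/- LESS gadget soundness (case x > y): In the same gadget (course c_x̄ with p*_{x̄} ∈ [1 − p*_x, 1 − p*_x + β], course c_z with capacity n_x/8 priced positively, n_x/4 students with preference list ({c_x̄,c_y},{c_z}), at most n_x/16 other students interested in c_z), if p*_x > p*_y + β then in any (α,β)-CEEI with n_x ≥ 2^8·α we must have p*_z = 0. -/

import Mathlib

open Finset

/-- An economy: course capacities and, for each student, an ordered list
(most preferred first) of permissible course bundles. -/
structure Econ (N M : ℕ) where
  q : Fin M → ℕ
  pref : Fin N → List (Finset (Fin M))

/-- Total price of a bundle. -/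
def cost {M : ℕ} (p : Fin M → ℝ) (S : Finset (Fin M)) : ℝ := ∑ j ∈ S, p j

/-- `Chooses p bdg l S`: `S` is the most preferred affordable bundle in the
ordered list `l` (most preferred first) at prices `p` with budget `bdg`
(`S = ∅` if no listed bundle is affordable). -/
def Chooses {M : ℕ} (p : Fin M → ℝ) (bdg : ℝ) (l : List (Finset (Fin M)))
    (S : Finset (Fin M)) : Prop :=
  (S = ∅ ∧ ∀ T ∈ l, ¬ cost p T ≤ bdg) ∨
  (S ∈ l ∧ cost p S ≤ bdg ∧ ∀ T ∈ l.take (l.idxOf S), ¬ cost p T ≤ bdg)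

/-- Number of students enrolled in course `j`. -/
def enroll {N M : ℕ} (x : Fin N → Finset (Fin M)) (j : Fin M) : ℕ :=
  (univ.filter fun i => j ∈ x i).card

/-- Clearing error of course `j`: oversubscription always counts; for a
positively priced course undersubscription counts as well. -/
noncomputable def zerr {N M : ℕ} (E : Econ N M) (p : Fin M → ℝ) (x : Fin N → Finset (Fin M))
    (j : Fin M) : ℝ :=
  if 0 < p j then (enroll x j : ℝ) - E.q j
  else max ((enroll x j : ℝ) - E.q j) 0

/-- L2 norm of the clearing-error vector. -/
noncomputable def clearErr {N M : ℕ} (E : Econ N M) (p : Fin M → ℝ)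
    (x : Fin N → Finset (Fin M)) : ℝ :=
  Real.sqrt (∑ j, (zerr E p x j) ^ 2)

/-- An `(α,β)`-CEEI: nonnegative prices, budgets in `[1,1+β]`, every student
is allocated her most preferred affordable bundle, and the total clearing
error is at most `α`. -/
structure IsCEEI {N M : ℕ} (E : Econ N M) (α β : ℝ) (p : Fin M → ℝ)
    (b : Fin N → ℝ) (x : Fin N → Finset (Fin M)) : Prop where
  price_nonneg : ∀ j, 0 ≤ p j
  budget : ∀ i, 1 ≤ b i ∧ b i ≤ 1 + β
  alloc : ∀ i, Chooses p (b i) (E.pref i) (x i)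
  clearing : clearErr E p x ≤ α

/-- Student `i` is interested in course `j` (lists some bundle containing it). -/
def Interested {N M : ℕ} (E : Econ N M) (j : Fin M) (i : Fin N) : Prop :=
  ∃ S ∈ E.pref i, j ∈ S

section Less

variable {N M : ℕ}

/-- The LESS gadget: a course `cxbar` whose price lies in
`[1 − p cx, 1 − p cx + β]`, an output course `cz` of capacity `nx/8`, and
`nx/4` students with ordered preference list `({cxbar, cy}, {cz})`; at most
`nx/16` other students are interested in `cz`; `nx ≥ 2^8·α`. -/
def LessGadget (E : Econ N M) (α β : ℝ) (cx cy cxbar cz : Fin M) (nx : ℕ)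
    (A : Finset (Fin N)) (p : Fin M → ℝ) : Prop :=
  cxbar ≠ cy ∧ cz ≠ cxbar ∧ cz ≠ cy ∧ cz ≠ cx ∧
  (0 < α) ∧ ((nx : ℝ) ≥ 2 ^ 8 * α) ∧
  (1 - p cx ≤ p cxbar ∧ p cxbar ≤ 1 - p cx + β) ∧
  ((A.card : ℝ) = nx / 4) ∧
  (∀ i ∈ A, E.pref i = [({cxbar, cy} : Finset (Fin M)), ({cz} : Finset (Fin M))]) ∧
  ((E.q cz : ℝ) = nx / 8) ∧
  ((({i | i ∉ A ∧ Interested E cz i} : Set (Fin N)).ncard : ℝ) ≤ nx / 16)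

end Less

/-- **LESS gadget soundness, case `p cx > p cy`.** If `p cx > p cy + β`, then
every one of the `nx/4` gadget students affords and takes `{cxbar, cy}`,
leaving `cz` (capacity `nx/8`, with at most `nx/16` other interested
students) undersubscribed by more than `α` whenever it is positively priced.
Hence in any `(α,β)`-CEEI we must have `p cz = 0`. -/
theorem less_gadget_zero {N M : ℕ} (E : Econ N M) (α β : ℝ)
    (cx cy cxbar cz : Fin M) (nx : ℕ) (A : Finset (Fin N))
    (p : Fin M → ℝ) (b : Fin N → ℝ) (x : Fin N → Finset (Fin M))
    (hG : LessGadget E α β cx cy cxbar cz nx A p)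
    (hC : IsCEEI E α β p b x)
    (hgt : p cx > p cy + β) :
    p cz = 0 := by
  by_contra hz
  have hpz : 0 < p cz := lt_of_le_of_ne (hC.price_nonneg cz) (Ne.symm hz)
  obtain ⟨hxy, hzxbar, hzy, hzx, hα, hnx, ⟨hp1, hp2⟩, hcard, hpref, hq, hother⟩ := hG
  have hcost : cost p {cxbar, cy} < 1 := by
    have h := Finset.sum_pair hxy (f := p)
    rw [cost, h]; linarith
  have hne : ({cz} : Finset (Fin M)) ≠ {cxbar, cy} := by
    intro heq
    have : cz ∈ ({cxbar, cy} : Finset (Fin M)) := heq ▸ Finset.mem_singleton_self cz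
    simp only [Finset.mem_insert, Finset.mem_singleton] at this
    rcases this with h | h
    · exact hzxbar h
    · exact hzy h
  have hx : ∀ i ∈ A, x i = {cxbar, cy} := by
    intro i hi
    have hb := (hC.budget i).1
    have hch := hC.alloc i
    rw [hpref i hi] at hch
    rcases hch with ⟨_, hno⟩ | ⟨hmem, hc, hprior⟩
    · exact absurd (le_trans hcost.le hb) (hno _ (by simp))
    · simp only [List.mem_cons, List.not_mem_nil, or_false, List.mem_singleton] at hmem
      rcases hmem with h | h
      · exact h
      · exfalso
        rw [h] at hprior
        have hidx : List.idxOf ({cz} : Finset (Fin M)) [({cxbar, cy} : Finset (Fin M)), {cz}] = 1 := by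
          rw [List.idxOf_cons_ne _ hne.symm]
          simp
        rw [hidx] at hprior
        exact hprior {cxbar, cy} (by simp) (le_trans hcost.le hb)
  -- enrollment bound
  have hsub : ↑(univ.filter fun i => cz ∈ x i) ⊆ {i : Fin N | i ∉ A ∧ Interested E cz i} := by
    intro i hi
    simp only [Finset.coe_filter, Set.mem_setOf_eq, Finset.mem_univ, true_and] at hi
    have hiA : i ∉ A := by
      intro hiA
      have := hx i hiA
      rw [this] at hi
      simp only [Finset.mem_insert, Finset.mem_singleton] at hi
      rcases hi with h | h
      · exact hzxbar h
      · exact hzy h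
    refine ⟨hiA, ?_⟩
    rcases hC.alloc i with ⟨he, _⟩ | ⟨hmem, _, _⟩
    · rw [he] at hi; simp at hi
    · exact ⟨x i, hmem, hi⟩
  have henroll : (enroll x cz : ℝ) ≤ (nx : ℝ) / 16 := by
    have h1 : (enroll x cz : ℕ) ≤ ({i : Fin N | i ∉ A ∧ Interested E cz i}).ncard := by
      rw [enroll, ← Set.ncard_coe_finset]
      exact Set.ncard_le_ncard hsub (Set.toFinite _)
    calc (enroll x cz : ℝ) ≤ (({i : Fin N | i ∉ A ∧ Interested E cz i}).ncard : ℝ) := by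
          exact_mod_cast h1
      _ ≤ (nx : ℝ) / 16 := hother
  have hzerr : zerr E p x cz ≤ -((nx : ℝ) / 16) := by
    rw [zerr, if_pos hpz, hq]
    linarith
  have habs : (nx : ℝ) / 16 ≤ |zerr E p x cz| := by
    exact le_abs.mpr (Or.inr (by linarith))
  have hce : |zerr E p x cz| ≤ clearErr E p x := by
    rw [clearErr, ← Real.sqrt_sq_eq_abs]
    exact Real.sqrt_le_sqrt (Finset.single_le_sum (f := fun j => (zerr E p x j)^2) (fun j _ => sq_nonneg _) (Finset.mem_univ cz))
  have hclear := hC.clearing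
  have h16 : 16 * α ≤ (nx : ℝ) / 16 := by linarith
  linarith
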